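/- For infinitely many natural numbers n, p_{n+1}^{1/(n+1)} / p_n^{1/n} < (log(n+1) + p_{n+1}^{-1 + 1/(n+1)}) / log n. -/

import Mathlib

open Finset in
private lemma not_summable_nth_prime :
    ¬ Summable (fun i : ℕ => (1 : ℝ) / (Nat.nth Nat.Prime i : ℝ)) := by
  have hinf := Nat.infinite_setOf_prime
  have hinj : Function.Injective (Nat.nth Nat.Prime) := Nat.nth_injective hinf
  intro hs
  apply not_summable_one_div_on_primes
  rw [← Function.Injective.summable_iff hinj (fun x hx => ?_)]
  · convert hs using 1
    funext k
    simp only [Function.comp_apply]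
    exact Set.indicator_of_mem (Nat.nth_mem_of_infinite hinf k) _
  · exact Set.indicator_of_notMem (by rwa [← Nat.range_nth_of_infinite hinf]) _

/-- `p n` is the `n`-th prime number (1-indexed), as a real number. -/
noncomputable def p (n : ℕ) : ℝ := Nat.nth Nat.Prime (n - 1)

private lemma two_le_p (n : ℕ) : (2 : ℝ) ≤ p n := by
  have := (Nat.nth_mem_of_infinite Nat.infinite_setOf_prime (n - 1)).two_le
  rw [p]
  exact_mod_cast this

theorem firoozbakht_type_inequality :
    {n : ℕ | p (n + 1) ^ ((1 : ℝ) / (n + 1)) / p n ^ ((1 : ℝ) / n) <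
      (Real.log (n + 1) + p (n + 1) ^ (-1 + (1 : ℝ) / (n + 1))) / Real.log n}.Infinite := by
  set S := {n : ℕ | p (n + 1) ^ ((1 : ℝ) / (n + 1)) / p n ^ ((1 : ℝ) / n) <
      (Real.log (n + 1) + p (n + 1) ^ (-1 + (1 : ℝ) / (n + 1))) / Real.log n} with hS
  by_contra hfin
  rw [Set.not_infinite] at hfin
  obtain ⟨M0, hM0⟩ := hfin.bddAbove
  set M : ℕ := M0 + 2 with hM
  have hMS : ∀ n, M ≤ n → n ∉ S := by
    intro n hn hnS
    have := hM0 hnS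
    omega
  -- r n = p n ^ (-1/n) * log n
  set r : ℕ → ℝ := fun n => p n ^ (-(1:ℝ)/n) * Real.log n with hr
  have hrpos : ∀ n : ℕ, 2 ≤ n → 0 < r n := by
    intro n hn
    have h2 : (0:ℝ) < p n := lt_of_lt_of_le two_pos (two_le_p n)
    have hn1 : (1:ℝ) < n := by exact_mod_cast hn
    exact mul_pos (Real.rpow_pos_of_pos h2 _) (Real.log_pos hn1)
  -- key step
  have key : ∀ n : ℕ, M ≤ n → r (n+1) + 1 / p (n+1) ≤ r n := by
    intro n hn
    have hn2 : (2:ℕ) ≤ n := by omega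
    have H := hMS n hn
    rw [hS, Set.mem_setOf_eq, not_lt] at H
    have ha : (0:ℝ) < p n := lt_of_lt_of_le two_pos (two_le_p n)
    have hb : (0:ℝ) < p (n+1) := lt_of_lt_of_le two_pos (two_le_p (n+1))
    have hL : (0:ℝ) < Real.log n := Real.log_pos (by exact_mod_cast hn2)
    have hL' : (0:ℝ) < Real.log ((n:ℝ)+1) := Real.log_pos (by
      have : (1:ℝ) ≤ (n:ℝ) := by exact_mod_cast Nat.one_le_of_lt hn2
      linarith)
    set a := p n
    set b := p (n+1)
    set u := a ^ ((1:ℝ)/n) with hu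
    set v := b ^ ((1:ℝ)/(n+1)) with hv
    have hu0 : 0 < u := Real.rpow_pos_of_pos ha _
    have hv0 : 0 < v := Real.rpow_pos_of_pos hb _
    have e1 : b ^ (-1 + (1:ℝ)/(n+1)) = b⁻¹ * v := by
      rw [Real.rpow_add hb, Real.rpow_neg_one, hv]
    have e2 : b ^ (-(1:ℝ)/((n:ℝ)+1)) = v⁻¹ := by
      rw [neg_div, Real.rpow_neg hb.le, hv]
    have e3 : a ^ (-(1:ℝ)/(n:ℝ)) = u⁻¹ := by
      rw [neg_div, Real.rpow_neg ha.le, hu]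
    rw [e1] at H
    have H' : (Real.log ((n:ℝ)+1) + b⁻¹ * v) * u ≤ v * Real.log n := by
      rw [div_le_div_iff₀ hL hu0] at H
      linarith [H]
    have target : v⁻¹ * Real.log ((n:ℝ)+1) + 1 / b ≤ u⁻¹ * Real.log n := by
      rw [← mul_le_mul_iff_of_pos_right (mul_pos hu0 hv0)]
      have expand1 : (v⁻¹ * Real.log ((n:ℝ)+1) + 1 / b) * (u * v) =
          (Real.log ((n:ℝ)+1) + b⁻¹ * v) * u := by
        field_simp
      have expand2 : u⁻¹ * Real.log (n:ℝ) * (u * v) = v * Real.log (n:ℝ) := by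
        field_simp
      rw [expand1, expand2]
      exact H'
    show b ^ (-(1:ℝ)/(↑(n+1):ℝ)) * Real.log (↑(n+1):ℝ) + 1 / b ≤ a ^ (-(1:ℝ)/(n:ℝ)) * Real.log n
    push_cast
    rw [e2, e3]
    exact target
  -- accumulate
  have acc : ∀ k : ℕ, r (M + k) + ∑ i ∈ Finset.range k, 1 / p (M + 1 + i) ≤ r M := by
    intro k
    induction k with
    | zero => simp
    | succ k ih =>
      have hk := key (M + k) (by omega)
      rw [Finset.sum_range_succ]
      have : M + (k + 1) = M + k + 1 := by ring
      rw [this]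
      have : M + 1 + k = M + k + 1 := by ring
      rw [this]
      linarith
  have bound : ∀ k : ℕ, ∑ i ∈ Finset.range k, 1 / p (M + 1 + i) ≤ r M := by
    intro k
    have := acc k
    have hpos := hrpos (M + k) (by omega)
    linarith
  -- divergence
  have hdiv : Filter.Tendsto (fun k => ∑ i ∈ Finset.range k, 1 / p (M + 1 + i))
      Filter.atTop Filter.atTop := by
    have heq : (fun k => ∑ i ∈ Finset.range k, 1 / p (M + 1 + i)) =
        fun k => ∑ i ∈ Finset.range k, (fun i => (1:ℝ) / (Nat.nth Nat.Prime (i + M))) i := by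
      funext k
      refine Finset.sum_congr rfl fun i _ => ?_
      have : M + 1 + i - 1 = i + M := by omega
      rw [p, this]
    rw [heq]
    have hns : ¬ Summable (fun i : ℕ => (1:ℝ) / (Nat.nth Nat.Prime (i + M))) := by
      intro hsum
      exact not_summable_nth_prime ((summable_nat_add_iff M).mp hsum)
    have hnn : ∀ i : ℕ, (0:ℝ) ≤ 1 / (Nat.nth Nat.Prime (i + M)) := by
      intro i; positivity
    by_contra hT
    exact hns ((summable_iff_not_tendsto_nat_atTop_of_nonneg hnn).mpr hT)
  obtain ⟨k, hk⟩ := (hdiv.eventually_gt_atTop (r M)).exists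
  exact absurd (bound k) (not_le.mpr hk)
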